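/- Let X be a convex and compact subset of a normed real vector space, let X be a random variable with values in X whose law is a regular Borel probability measure, and let Y be a random variable with values in [0,1]. Then inf over all Lipschitz functions f : X → [0,1] of E[ℓ(f(X), Y)] equals inf over all Borel-measurable functions f : X → [0,1] of E[ℓ(f(X), Y)]. -/

import Mathlib

open MeasureTheory ProbabilityTheory

open MeasureTheory ProbabilityTheory Metric Set

/-- Lipschitz Urysohn bump between a compact set and an open superset. -/
lemma bump_lemma {E : Type*} [MetricSpace E] {K V : Set E}
    (hK : IsCompact K) (hV : IsOpen V) (hKV : K ⊆ V) :
    ∃ φ : E → ℝ, (∃ C : NNReal, LipschitzWith C φ) ∧ (∀ x, φ x ∈ Icc (0:ℝ) 1) ∧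
      (∀ x ∈ K, φ x = 1) ∧ (∀ x ∉ V, φ x = 0) := by
  rcases K.eq_empty_or_nonempty with h | hne
  · exact ⟨fun _ => 0, ⟨0, LipschitzWith.const 0⟩,
      fun x => ⟨le_refl 0, zero_le_one⟩, fun x hx => by simp [h] at hx, fun _ _ => rfl⟩
  obtain ⟨d, hd, hdV⟩ := hK.exists_thickening_subset_open hV hKV
  refine ⟨fun x => max 0 (1 - infDist x K / d), ⟨⟨d⁻¹, by positivity⟩, ?_⟩, ?_, ?_, ?_⟩
  · apply LipschitzWith.of_dist_le_mul
    intro x y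
    rw [Real.dist_eq]
    have hL : |infDist x K - infDist y K| ≤ dist x y := by
      have := (lipschitz_infDist_pt K).dist_le_mul x y
      simpa [Real.dist_eq] using this
    have key : (1 - infDist x K / d) - (1 - infDist y K / d)
        = (infDist y K - infDist x K) / d := by ring
    calc |max 0 (1 - infDist x K / d) - max 0 (1 - infDist y K / d)|
        ≤ |(1 - infDist x K / d) - (1 - infDist y K / d)| := by
          rw [max_comm 0 _, max_comm 0 _]; exact abs_max_sub_max_le_abs _ _ _
      _ = |infDist y K - infDist x K| / d := by
          rw [key, abs_div, abs_of_pos hd]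
      _ ≤ dist x y / d := by
          gcongr; rw [abs_sub_comm]; exact hL
      _ = _ := by push_cast; rw [div_eq_inv_mul]; rfl
  · intro x
    refine ⟨le_max_left _ _, max_le (by norm_num) ?_⟩
    have : 0 ≤ infDist x K / d := div_nonneg infDist_nonneg hd.le
    linarith
  · intro x hx
    show max 0 (1 - infDist x K / d) = 1
    rw [infDist_zero_of_mem hx]
    norm_num
  · intro x hx
    show max 0 (1 - infDist x K / d) = 0
    have h1 : ¬ x ∈ thickening d K := fun h => hx (hdV h)
    rw [mem_thickening_iff_infDist_lt hne] at h1
    push_neg at h1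
    have h2 : (1:ℝ) ≤ infDist x K / d := (one_le_div hd).mpr h1
    exact max_eq_left (by linarith)

lemma count_lemma (n : ℕ) (hn : 1 ≤ n) (t : ℝ) (ht : t ∈ Icc (0:ℝ) 1) :
    (∑ k ∈ Finset.range n, (if ((k:ℝ)+1)/n ≤ t then (1:ℝ) else 0)) = (⌊(n:ℝ) * t⌋₊ : ℝ) := by
  classical
  have hn' : (0:ℝ) < n := by exact_mod_cast hn
  have hnt : (0:ℝ) ≤ (n:ℝ)*t := mul_nonneg hn'.le ht.1
  have hfil : (Finset.range n).filter (fun k : ℕ => ((k:ℝ)+1)/n ≤ t)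
      = Finset.range ⌊(n:ℝ)*t⌋₊ := by
    ext k
    simp only [Finset.mem_filter, Finset.mem_range]
    constructor
    · rintro ⟨hk, hkt⟩
      rw [div_le_iff₀ hn'] at hkt
      have h1 : ((k+1:ℕ):ℝ) ≤ (n:ℝ)*t := by push_cast; linarith
      have := Nat.le_floor h1
      omega
    · intro hk
      have hk1 : (k+1:ℕ) ≤ ⌊(n:ℝ)*t⌋₊ := hk
      have h2 : ((k:ℝ)+1) ≤ (n:ℝ)*t := by
        calc ((k:ℝ)+1) = ((k+1:ℕ):ℝ) := by push_cast; ring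
          _ ≤ (⌊(n:ℝ)*t⌋₊ : ℝ) := by exact_mod_cast hk1
          _ ≤ (n:ℝ)*t := Nat.floor_le hnt
      have hkn : k < n := by
        have h3 : (n:ℝ)*t ≤ ((n:ℕ):ℝ) := by nlinarith [ht.2]
        have hfn : ⌊(n:ℝ)*t⌋₊ ≤ n := by
          simpa using Nat.floor_le_floor h3
        omega
      exact ⟨hkn, by rw [div_le_iff₀ hn']; linarith⟩
  rw [← Finset.sum_filter, hfil]
  simp

-- grid-approximation bound
lemma grid_bound (n : ℕ) (hn : 1 ≤ n) (t : ℝ) (ht : t ∈ Icc (0:ℝ) 1) :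
    |(∑ k ∈ Finset.range n, (if ((k:ℝ)+1)/n ≤ t then (1:ℝ) else 0))/n - t| ≤ 1/n := by
  rw [count_lemma n hn t ht]
  have hn' : (0:ℝ) < n := by exact_mod_cast hn
  have hnt : (0:ℝ) ≤ (n:ℝ)*t := mul_nonneg hn'.le ht.1
  have h1 : (⌊(n:ℝ)*t⌋₊ : ℝ) ≤ (n:ℝ)*t := Nat.floor_le hnt
  have h2 : (n:ℝ)*t < (⌊(n:ℝ)*t⌋₊ : ℝ) + 1 := Nat.lt_floor_add_one _
  rw [abs_le]
  constructor
  · rw [le_sub_iff_add_le, le_div_iff₀ hn']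
    have he : (-(1/(n:ℝ))+t)*(n:ℝ) = (n:ℝ)*t - 1 := by field_simp; ring
    linarith [he]
  · rw [sub_le_iff_le_add, div_le_iff₀ hn']
    have he : (1/(n:ℝ)+t)*(n:ℝ) = (n:ℝ)*t + 1 := by field_simp; ring
    linarith [he]

/-- L¹ approximation of a measurable `[0,1]`-valued function by a Lipschitz one. -/
lemma lip_approx {E : Type*} [MetricSpace E] [MeasurableSpace E] [BorelSpace E]
    (μ : Measure E) [IsProbabilityMeasure μ] (𝒳 : Set E) (h𝒳 : MeasurableSet 𝒳)
    (hμc : μ 𝒳ᶜ = 0)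
    (hreg : ∀ S ⊆ 𝒳, MeasurableSet S → ∀ ε : ℝ, 0 < ε →
      ∃ K V : Set E, IsCompact K ∧ IsOpen V ∧ K ⊆ S ∧ S ⊆ V ∧ (μ (V \ K)).toReal ≤ ε)
    (f : E → ℝ) (hf : Measurable f) (hf01 : ∀ x, f x ∈ Icc (0:ℝ) 1)
    (δ : ℝ) (hδ : 0 < δ) :
    ∃ g : E → ℝ, (∃ C : NNReal, LipschitzWith C g) ∧ (∀ x, g x ∈ Icc (0:ℝ) 1) ∧
      ∫ x, |g x - f x| ∂μ ≤ δ := by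
  classical
  obtain ⟨n, hn1, hn2⟩ : ∃ n : ℕ, 1 ≤ n ∧ (1:ℝ)/n ≤ δ/2 := by
    obtain ⟨n, hn⟩ := exists_nat_ge (2/δ)
    refine ⟨max 1 n, le_max_left _ _, ?_⟩
    have h0 : (0:ℝ) < max 1 n := by positivity
    rw [div_le_iff₀ h0]
    have : (2:ℝ)/δ ≤ (max 1 n : ℕ) := by
      calc (2:ℝ)/δ ≤ n := hn
        _ ≤ ((max 1 n : ℕ):ℝ) := by exact_mod_cast le_max_right 1 n
    rw [div_le_iff₀ hδ] at this
    nlinarith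
  have hn' : (0:ℝ) < n := by exact_mod_cast hn1
  set T : ℕ → Set E := fun k => 𝒳 ∩ {x | ((k:ℝ)+1)/n ≤ f x} with hT
  have hTmeas : ∀ k, MeasurableSet (T k) :=
    fun k => h𝒳.inter (hf measurableSet_Ici)
  have hTsub : ∀ k, T k ⊆ 𝒳 := fun k => inter_subset_left
  choose K V hKcomp hVopen hKT hTV hμKV using
    fun k : ℕ => hreg (T k) (hTsub k) (hTmeas k) (δ/2) (by positivity)
  choose φ hφlip hφ01 hφK hφV using
    fun k : ℕ => bump_lemma (hKcomp k) (hVopen k) ((hKT k).trans (hTV k))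
  set g : E → ℝ := fun x => (∑ k ∈ Finset.range n, φ k x) / n with hg
  have hglip : ∃ C : NNReal, LipschitzWith C g := by
    have hsum : ∀ s : Finset ℕ, ∃ C : NNReal, LipschitzWith C (fun x => ∑ k ∈ s, φ k x) := by
      intro s
      induction s using Finset.cons_induction with
      | empty => exact ⟨0, by simpa using LipschitzWith.const (0:ℝ)⟩
      | cons a s ha ih =>
        obtain ⟨C, hC⟩ := ih
        obtain ⟨Ca, hCa⟩ := hφlip a
        exact ⟨Ca + C, by simpa [Finset.sum_insert ha] using hCa.add hC⟩
    obtain ⟨C, hC⟩ := hsum (Finset.range n)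
    refine ⟨C, LipschitzWith.of_dist_le_mul fun x y => ?_⟩
    have h1 := hC.dist_le_mul x y
    have h2 : dist (g x) (g y)
        = dist (∑ k ∈ Finset.range n, φ k x) (∑ k ∈ Finset.range n, φ k y) / n := by
      simp only [hg, Real.dist_eq, ← sub_div, abs_div, abs_of_pos hn']
    rw [h2]
    have h3 := div_le_self (dist_nonneg (x := ∑ k ∈ Finset.range n, φ k x)
      (y := ∑ k ∈ Finset.range n, φ k y)) (by exact_mod_cast hn1 : (1:ℝ) ≤ n)
    exact h3.trans h1
  have hg01 : ∀ x, g x ∈ Icc (0:ℝ) 1 := by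
    intro x
    constructor
    · apply div_nonneg _ hn'.le
      exact Finset.sum_nonneg fun k _ => (hφ01 k x).1
    · rw [div_le_one hn']
      calc ∑ k ∈ Finset.range n, φ k x ≤ ∑ k ∈ Finset.range n, 1 :=
            Finset.sum_le_sum fun k _ => (hφ01 k x).2
        _ = n := by simp
  refine ⟨g, hglip, hg01, ?_⟩
  -- pointwise bound on 𝒳
  set H : E → ℝ := fun x => 1/n + (∑ k ∈ Finset.range n,
      (V k \ K k).indicator (fun _ => (1:ℝ)) x) / n with hH
  have hptwise : ∀ x ∈ 𝒳, |g x - f x| ≤ H x := by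
    intro x hx
    have hterm : ∀ k ∈ Finset.range n,
        |φ k x - (if ((k:ℝ)+1)/n ≤ f x then (1:ℝ) else 0)|
          ≤ (V k \ K k).indicator (fun _ => (1:ℝ)) x := by
      intro k _
      by_cases hxK : x ∈ K k
      · have h1 : φ k x = 1 := hφK k x hxK
        have h2 : x ∈ T k := hKT k hxK
        have h3 : ((k:ℝ)+1)/n ≤ f x := h2.2
        simp [h1, h3, Set.indicator_nonneg (fun _ _ => zero_le_one)]
      by_cases hxV : x ∈ V k
      · have hind : (V k \ K k).indicator (fun _ => (1:ℝ)) x = 1 := by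
          rw [Set.indicator_of_mem (show x ∈ V k \ K k from ⟨hxV, hxK⟩)]
        rw [hind]
        have h1 := (hφ01 k x).1; have h2 := (hφ01 k x).2
        by_cases hc : ((k:ℝ)+1)/n ≤ f x
        · rw [if_pos hc, abs_le]; constructor <;> linarith
        · rw [if_neg hc, sub_zero, abs_le]; constructor <;> linarith
      · have h1 : φ k x = 0 := hφV k x hxV
        have h2 : x ∉ T k := fun h => hxV (hTV k h)
        have h3 : ¬ ((k:ℝ)+1)/n ≤ f x := fun h => h2 ⟨hx, h⟩
        simp [h1, h3, Set.indicator_nonneg (fun _ _ => zero_le_one)]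
    have hsum1 : |∑ k ∈ Finset.range n, φ k x
        - ∑ k ∈ Finset.range n, (if ((k:ℝ)+1)/n ≤ f x then (1:ℝ) else 0)|
        ≤ ∑ k ∈ Finset.range n, (V k \ K k).indicator (fun _ => (1:ℝ)) x := by
      rw [← Finset.sum_sub_distrib]
      exact (Finset.abs_sum_le_sum_abs _ _).trans (Finset.sum_le_sum hterm)
    have hgrid := grid_bound n hn1 (f x) (hf01 x)
    calc |g x - f x|
        ≤ |g x - (∑ k ∈ Finset.range n, (if ((k:ℝ)+1)/n ≤ f x then (1:ℝ) else 0))/n|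
          + |(∑ k ∈ Finset.range n, (if ((k:ℝ)+1)/n ≤ f x then (1:ℝ) else 0))/n - f x| :=
          abs_sub_le _ _ _
      _ ≤ (∑ k ∈ Finset.range n, (V k \ K k).indicator (fun _ => (1:ℝ)) x)/n + 1/n := by
          refine add_le_add ?_ hgrid
          rw [hg, ← sub_div, abs_div, abs_of_pos hn']
          gcongr
      _ = H x := by rw [hH]; ring
  -- integral bound
  obtain ⟨C, hC⟩ := hglip
  have hgm : Measurable g := hC.continuous.measurable
  have hint1 : Integrable (fun x => |g x - f x|) μ := by
    refine Integrable.mono' (integrable_const (2:ℝ))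
      ((hgm.sub hf).abs.aestronglyMeasurable) (ae_of_all _ fun x => ?_)
    rw [Real.norm_eq_abs, abs_abs]
    have h1 := abs_sub_abs_le_abs_sub (g x) (f x)
    have h2 : |g x| ≤ 1 := abs_le.2 ⟨by linarith [(hg01 x).1], (hg01 x).2⟩
    have h3 : |f x| ≤ 1 := abs_le.2 ⟨by linarith [(hf01 x).1], (hf01 x).2⟩
    calc |g x - f x| ≤ |g x| + |f x| := abs_sub _ _
      _ ≤ 2 := by linarith
  have hintInd : ∀ k, Integrable ((V k \ K k).indicator fun _ => (1:ℝ)) μ := fun k =>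
    (integrable_const 1).indicator ((hVopen k).measurableSet.diff
      (hKcomp k).isClosed.measurableSet)
  have hintS : Integrable (fun x => (∑ k ∈ Finset.range n,
      (V k \ K k).indicator (fun _ => (1:ℝ)) x) / n) μ := by
    exact (integrable_finset_sum _ fun k _ => hintInd k).div_const _
  have hintH : Integrable H μ := (integrable_const (1/(n:ℝ))).add hintS
  have hae : ∀ᵐ x ∂μ, |g x - f x| ≤ H x := by
    have h𝒳ae : ∀ᵐ x ∂μ, x ∈ 𝒳 := by
      rw [ae_iff]
      have : {x | ¬ x ∈ 𝒳} = 𝒳ᶜ := rfl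
      rw [this]; exact hμc
    filter_upwards [h𝒳ae] with x hx using hptwise x hx
  calc ∫ x, |g x - f x| ∂μ ≤ ∫ x, H x ∂μ := integral_mono_ae hint1 hintH hae
    _ = 1/n + (∑ k ∈ Finset.range n, (μ (V k \ K k)).toReal)/n := by
        rw [hH, integral_add (integrable_const _) hintS, integral_const]
        simp only [probReal_univ, ENNReal.toReal_one, smul_eq_mul, one_mul]
        congr 1
        rw [integral_div, integral_finset_sum _ fun k _ => hintInd k]
        congr 1
        refine Finset.sum_congr rfl fun k _ => ?_
        rw [integral_indicator_const _ ((hVopen k).measurableSet.diff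
          (hKcomp k).isClosed.measurableSet)]
        simp [Measure.real]
    _ ≤ δ/2 + δ/2 := by
        refine add_le_add hn2 ?_
        rw [div_le_iff₀ hn']
        calc ∑ k ∈ Finset.range n, (μ (V k \ K k)).toReal
            ≤ ∑ k ∈ Finset.range n, δ/2 := Finset.sum_le_sum fun k _ => hμKV k
          _ = n * (δ/2) := by rw [Finset.sum_const, Finset.card_range]; ring
          _ = δ/2 * n := by ring
    _ = δ := by ring

open Filter Topology in
/-- Integrability of the loss along a measurable `[0,1]`-valued predictor, assuming
slice-measurability of the loss. -/
lemma loss_integrable {Ω : Type*} [MeasureSpace Ω] [IsProbabilityMeasure (ℙ : Measure Ω)]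
    (Y : Ω → ℝ) (hY01 : ∀ ω, Y ω ∈ Icc (0:ℝ) 1)
    (M : ℝ) (ℓ : ℝ → ℝ → ℝ)
    (hℓ_val : ∀ x ∈ Icc (0:ℝ) 1, ∀ y ∈ Icc (0:ℝ) 1, ℓ x y ∈ Icc (0:ℝ) 1)
    (hℓ_lip : ∀ y ∈ Icc (0:ℝ) 1, LipschitzOnWith M.toNNReal (fun x => ℓ x y) (Icc (0:ℝ) 1))
    (hA : ∀ x ∈ Icc (0:ℝ) 1, AEStronglyMeasurable (fun ω => ℓ x (Y ω)) (ℙ : Measure Ω))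
    (h : Ω → ℝ) (hh : Measurable h) (hh01 : ∀ ω, h ω ∈ Icc (0:ℝ) 1) :
    Integrable (fun ω => ℓ (h ω) (Y ω)) := by
  classical
  set q : ℕ → Ω → ℝ := fun n ω => ((⌊((n:ℝ)+1) * h ω⌋₊ : ℕ) : ℝ)/((n:ℝ)+1) with hq
  have hn1 : ∀ n : ℕ, (0:ℝ) < (n:ℝ)+1 := fun n => by positivity
  have hfl : ∀ (n : ℕ) (ω : Ω), ⌊((n:ℝ)+1) * h ω⌋₊ ≤ n+1 := by
    intro n ω
    have h1 : ((n:ℝ)+1) * h ω ≤ ((n+1:ℕ):ℝ) := by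
      push_cast
      nlinarith [(hh01 ω).2, (hh01 ω).1, (hn1 n)]
    have h2 := Nat.floor_le_floor h1
    rwa [Nat.floor_natCast] at h2
  have hq01 : ∀ n ω, q n ω ∈ Icc (0:ℝ) 1 := by
    intro n ω
    constructor
    · positivity
    · rw [div_le_one (hn1 n)]
      have := hfl n ω
      push_cast
      exact_mod_cast this
  have hqh : ∀ n ω, |q n ω - h ω| ≤ 1/((n:ℝ)+1) := by
    intro n ω
    have h0 : (0:ℝ) ≤ ((n:ℝ)+1) * h ω := mul_nonneg (hn1 n).le (hh01 ω).1
    have h1 : ((⌊((n:ℝ)+1) * h ω⌋₊ : ℕ):ℝ) ≤ ((n:ℝ)+1) * h ω := Nat.floor_le h0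
    have h2 : ((n:ℝ)+1) * h ω < (⌊((n:ℝ)+1) * h ω⌋₊ : ℕ) + 1 := Nat.lt_floor_add_one _
    rw [abs_le]
    constructor
    · rw [hq, le_sub_iff_add_le, le_div_iff₀ (hn1 n)]
      have : (-(1/((n:ℝ)+1)) + h ω) * ((n:ℝ)+1) = ((n:ℝ)+1) * h ω - 1 := by
        field_simp; ring
      rw [this]; linarith
    · rw [hq, sub_le_iff_le_add, div_le_iff₀ (hn1 n)]
      have : (1/((n:ℝ)+1) + h ω) * ((n:ℝ)+1) = ((n:ℝ)+1) * h ω + 1 := by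
        field_simp; ring
      rw [this]; linarith
  have hJm : ∀ n : ℕ, AEStronglyMeasurable (fun ω => ℓ (q n ω) (Y ω)) (ℙ : Measure Ω) := by
    intro n
    have heq : (fun ω => ℓ (q n ω) (Y ω)) = fun ω =>
        ∑ k ∈ Finset.range (n+2), ({ω | ⌊((n:ℝ)+1) * h ω⌋₊ = k}.indicator
          (fun ω => ℓ (((k:ℕ):ℝ)/((n:ℝ)+1)) (Y ω))) ω := by
      funext ω
      simp only [Set.indicator_apply, Set.mem_setOf_eq]
      rw [Finset.sum_ite_eq (Finset.range (n+2)) (⌊((n:ℝ)+1) * h ω⌋₊)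
        (fun k => ℓ (((k:ℕ):ℝ)/((n:ℝ)+1)) (Y ω))]
      rw [if_pos (Finset.mem_range.2 (by have := hfl n ω; omega))]
    rw [heq]
    refine Finset.aestronglyMeasurable_fun_sum _ fun k hk => ?_
    refine AEStronglyMeasurable.indicator ?_ ?_
    · refine hA _ ⟨by positivity, ?_⟩
      rw [div_le_one (hn1 n)]
      have : k ≤ n+1 := by simp only [Finset.mem_range] at hk; omega
      exact_mod_cast this
    · exact (hh.const_mul _ |>.nat_floor) (measurableSet_singleton k)
  have htend : ∀ ω, Tendsto (fun n => ℓ (q n ω) (Y ω)) atTop (𝓝 (ℓ (h ω) (Y ω))) := by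
    intro ω
    rw [tendsto_iff_dist_tendsto_zero]
    refine squeeze_zero (g := fun n : ℕ => (M.toNNReal : ℝ) * (1/((n:ℝ)+1))) (fun n => dist_nonneg) (fun n => ?_) ?_
    · show dist (ℓ (q n ω) (Y ω)) (ℓ (h ω) (Y ω)) ≤ (M.toNNReal : ℝ) * (1/((n:ℝ)+1))
      calc dist (ℓ (q n ω) (Y ω)) (ℓ (h ω) (Y ω))
          ≤ (M.toNNReal : ℝ) * dist (q n ω) (h ω) :=
            (hℓ_lip (Y ω) (hY01 ω)).dist_le_mul _ (hq01 n ω) _ (hh01 ω)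
        _ ≤ (M.toNNReal : ℝ) * (1/((n:ℝ)+1)) := by
            refine mul_le_mul_of_nonneg_left ?_ (M.toNNReal.coe_nonneg)
            rw [Real.dist_eq]; exact hqh n ω
    · have := tendsto_one_div_add_atTop_nhds_zero_nat.const_mul (M.toNNReal : ℝ)
      simpa using this
  have hIm : AEStronglyMeasurable (fun ω => ℓ (h ω) (Y ω)) (ℙ : Measure Ω) :=
    aestronglyMeasurable_of_tendsto_ae atTop hJm (ae_of_all _ htend)
  refine Integrable.mono' (integrable_const (1:ℝ)) hIm (ae_of_all _ fun ω => ?_)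
  rw [Real.norm_eq_abs]
  have := hℓ_val (h ω) (hh01 ω) (Y ω) (hY01 ω)
  exact abs_le.2 ⟨by linarith [this.1], this.2⟩

/-- Lemma 7: if `X` is a random variable with values in a convex compact subset `𝒳` of a
normed real vector space whose law is a regular Borel probability measure, and `Y` takes
values in `[0,1]`, then for an `M`-Lipschitz (in its first argument) loss `ℓ`, the infimum
of `E[ℓ(f(X), Y)]` over Lipschitz functions `f : 𝒳 → [0,1]` equals the infimum over
Borel-measurable functions `f : 𝒳 → [0,1]`. -/
theorem stmt_14 {E : Type*} [NormedAddCommGroup E] [NormedSpace ℝ E]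
    [MeasurableSpace E] [BorelSpace E]
    (𝒳 : Set E) (h𝒳_conv : Convex ℝ 𝒳) (h𝒳_comp : IsCompact 𝒳) (h𝒳_ne : 𝒳.Nonempty)
    {Ω : Type*} [MeasureSpace Ω] [IsProbabilityMeasure (ℙ : Measure Ω)]
    (X : Ω → E) (hX : Measurable X) (hX𝒳 : ∀ ω, X ω ∈ 𝒳)
    -- the law of `X` is regular:
    (hreg : ∀ S ⊆ 𝒳, MeasurableSet S → ∀ ε : ℝ, 0 < ε →
      ∃ K V : Set E, IsCompact K ∧ IsOpen V ∧ K ⊆ S ∧ S ⊆ V ∧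
        ((Measure.map X (ℙ : Measure Ω)) (V \ K)).toReal ≤ ε)
    (Y : Ω → ℝ) (hY : Measurable Y) (hY01 : ∀ ω, Y ω ∈ Set.Icc (0:ℝ) 1)
    (M : ℝ) (hM : 0 ≤ M)
    (ℓ : ℝ → ℝ → ℝ)
    (hℓ_val : ∀ x ∈ Set.Icc (0:ℝ) 1, ∀ y ∈ Set.Icc (0:ℝ) 1, ℓ x y ∈ Set.Icc (0:ℝ) 1)
    (hℓ_lip : ∀ y ∈ Set.Icc (0:ℝ) 1,
      LipschitzOnWith M.toNNReal (fun x => ℓ x y) (Set.Icc (0:ℝ) 1)) :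
    sInf {r : ℝ | ∃ f : E → ℝ, (∃ K : NNReal, LipschitzOnWith K f 𝒳) ∧
        (∀ x ∈ 𝒳, f x ∈ Set.Icc (0:ℝ) 1) ∧ r = ∫ ω, ℓ (f (X ω)) (Y ω)} =
    sInf {r : ℝ | ∃ f : E → ℝ, Measurable f ∧
        (∀ x ∈ 𝒳, f x ∈ Set.Icc (0:ℝ) 1) ∧ r = ∫ ω, ℓ (f (X ω)) (Y ω)} := by
  classical
  set A := {r : ℝ | ∃ f : E → ℝ, (∃ K : NNReal, LipschitzOnWith K f 𝒳) ∧
        (∀ x ∈ 𝒳, f x ∈ Set.Icc (0:ℝ) 1) ∧ r = ∫ ω, ℓ (f (X ω)) (Y ω)} with hAdef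
  set B := {r : ℝ | ∃ f : E → ℝ, Measurable f ∧
        (∀ x ∈ 𝒳, f x ∈ Set.Icc (0:ℝ) 1) ∧ r = ∫ ω, ℓ (f (X ω)) (Y ω)} with hBdef
  have hIcc0 : (0:ℝ) ∈ Icc (0:ℝ) 1 := ⟨le_refl 0, zero_le_one⟩
  have hAne : A.Nonempty :=
    ⟨_, fun _ => 0, ⟨0, (LipschitzWith.const 0).lipschitzOnWith⟩, fun _ _ => hIcc0, rfl⟩
  have hBne : B.Nonempty := ⟨_, fun _ => 0, measurable_const, fun _ _ => hIcc0, rfl⟩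
  have hlb : ∀ (f : E → ℝ), (∀ x ∈ 𝒳, f x ∈ Icc (0:ℝ) 1) →
      0 ≤ ∫ ω, ℓ (f (X ω)) (Y ω) := fun f hf =>
    integral_nonneg fun ω => (hℓ_val _ (hf _ (hX𝒳 ω)) _ (hY01 ω)).1
  have hAlb : ∀ r ∈ A, (0:ℝ) ≤ r := by rintro r ⟨f, _, hf01, rfl⟩; exact hlb f hf01
  have hBlb : ∀ r ∈ B, (0:ℝ) ≤ r := by rintro r ⟨f, _, hf01, rfl⟩; exact hlb f hf01
  by_cases hSM : ∀ x ∈ Icc (0:ℝ) 1, AEStronglyMeasurable (fun ω => ℓ x (Y ω)) (ℙ : Measure Ω)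
  swap
  · -- degenerate case: some slice is not a.e. strongly measurable, both sides are `0`
    push_neg at hSM
    obtain ⟨x₀, hx₀, hnm⟩ := hSM
    have hni : ¬ Integrable (fun ω => ℓ x₀ (Y ω)) (ℙ : Measure Ω) :=
      fun hint => hnm hint.aestronglyMeasurable
    have h0 : (0:ℝ) = ∫ ω, ℓ ((fun _ : E => x₀) (X ω)) (Y ω) := (integral_undef hni).symm
    have h0A : (0:ℝ) ∈ A :=
      ⟨fun _ => x₀, ⟨0, (LipschitzWith.const x₀).lipschitzOnWith⟩, fun _ _ => hx₀, h0⟩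
    have h0B : (0:ℝ) ∈ B := ⟨fun _ => x₀, measurable_const, fun _ _ => hx₀, h0⟩
    have e1 : sInf A = 0 :=
      le_antisymm (csInf_le ⟨0, hAlb⟩ h0A) (le_csInf hAne hAlb)
    have e2 : sInf B = 0 :=
      le_antisymm (csInf_le ⟨0, hBlb⟩ h0B) (le_csInf hBne hBlb)
    rw [e1, e2]
  -- main case
  set μ := Measure.map X (ℙ : Measure Ω) with hμdef
  haveI : IsProbabilityMeasure μ := Measure.isProbabilityMeasure_map hX.aemeasurable
  have h𝒳m : MeasurableSet 𝒳 := h𝒳_comp.isClosed.measurableSet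
  have hμc : μ 𝒳ᶜ = 0 := by
    rw [hμdef, Measure.map_apply hX h𝒳m.compl]
    have : X ⁻¹' 𝒳ᶜ = ∅ := by
      ext ω; simp [hX𝒳 ω]
    simp [this]
  apply le_antisymm
  · -- `sInf A ≤ sInf B` : approximate any measurable predictor by a Lipschitz one
    refine le_csInf hBne ?_
    rintro r ⟨f, hfm, hf01, rfl⟩
    refine le_of_forall_pos_le_add fun ε hε => ?_
    set f' : E → ℝ := fun x => max 0 (min 1 (f x)) with hf'def
    have hf'm : Measurable f' := measurable_const.max (measurable_const.min hfm)
    have hf'01 : ∀ x, f' x ∈ Icc (0:ℝ) 1 := fun x =>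
      ⟨le_max_left _ _, max_le zero_le_one (min_le_left _ _)⟩
    have hf'eq : ∀ x ∈ 𝒳, f' x = f x := by
      intro x hx
      rw [hf'def]
      simp only []
      rw [min_eq_right (hf01 x hx).2, max_eq_right (hf01 x hx).1]
    have hfeq : (fun ω => ℓ (f (X ω)) (Y ω)) = fun ω => ℓ (f' (X ω)) (Y ω) :=
      funext fun ω => by rw [hf'eq _ (hX𝒳 ω)]
    rw [hfeq]
    have hδ : 0 < ε/(M+1) := by positivity
    obtain ⟨g, ⟨C, hC⟩, hg01, hgL1⟩ :=
      lip_approx μ 𝒳 h𝒳m hμc hreg f' hf'm hf'01 (ε/(M+1)) hδ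
    have hgm : Measurable g := hC.continuous.measurable
    have hint_f' : Integrable (fun ω => ℓ (f' (X ω)) (Y ω)) :=
      loss_integrable Y hY01 M ℓ hℓ_val hℓ_lip hSM (fun ω => f' (X ω))
        (hf'm.comp hX) (fun ω => hf'01 _)
    have hint_g : Integrable (fun ω => ℓ (g (X ω)) (Y ω)) :=
      loss_integrable Y hY01 M ℓ hℓ_val hℓ_lip hSM (fun ω => g (X ω))
        (hgm.comp hX) (fun ω => hg01 _)
    have hint_d : Integrable (fun ω => |g (X ω) - f' (X ω)|) := by
      refine Integrable.mono' (integrable_const (2:ℝ))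
        (((hgm.comp hX).sub (hf'm.comp hX)).abs.aestronglyMeasurable)
        (ae_of_all _ fun ω => ?_)
      rw [Real.norm_eq_abs, abs_abs]
      have h2 : |g (X ω)| ≤ 1 := abs_le.2 ⟨by linarith [(hg01 (X ω)).1], (hg01 (X ω)).2⟩
      have h3 : |f' (X ω)| ≤ 1 :=
        abs_le.2 ⟨by linarith [(hf'01 (X ω)).1], (hf'01 (X ω)).2⟩
      calc |g (X ω) - f' (X ω)| ≤ |g (X ω)| + |f' (X ω)| := abs_sub _ _
        _ ≤ 2 := by linarith
    have hpt : ∀ ω, ℓ (g (X ω)) (Y ω) ≤ ℓ (f' (X ω)) (Y ω) + M * |g (X ω) - f' (X ω)| := by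
      intro ω
      have hd := (hℓ_lip (Y ω) (hY01 ω)).dist_le_mul _ (hg01 (X ω)) _ (hf'01 (X ω))
      rw [Real.dist_eq, Real.dist_eq, Real.coe_toNNReal M hM] at hd
      have := le_abs_self (ℓ (g (X ω)) (Y ω) - ℓ (f' (X ω)) (Y ω))
      linarith
    have hmono := integral_mono hint_g (hint_f'.add (hint_d.const_mul M)) hpt
    have hmap : ∫ ω, |g (X ω) - f' (X ω)| = ∫ x, |g x - f' x| ∂μ :=
      (integral_map hX.aemeasurable ((hgm.sub hf'm).abs.aestronglyMeasurable)).symm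
    have hmem : ∫ ω, ℓ (g (X ω)) (Y ω) ∈ A :=
      ⟨g, ⟨C, hC.lipschitzOnWith⟩, fun x _ => hg01 x, rfl⟩
    calc sInf A ≤ ∫ ω, ℓ (g (X ω)) (Y ω) := csInf_le ⟨0, hAlb⟩ hmem
      _ ≤ ∫ ω, (ℓ (f' (X ω)) (Y ω) + M * |g (X ω) - f' (X ω)|) := hmono
      _ = (∫ ω, ℓ (f' (X ω)) (Y ω)) + M * ∫ ω, |g (X ω) - f' (X ω)| := by
          rw [integral_add hint_f' (hint_d.const_mul M), integral_const_mul]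
      _ ≤ (∫ ω, ℓ (f' (X ω)) (Y ω)) + M * (ε/(M+1)) := by
          have h1 : ∫ ω, |g (X ω) - f' (X ω)| ≤ ε/(M+1) := by rw [hmap]; exact hgL1
          nlinarith
      _ ≤ (∫ ω, ℓ (f' (X ω)) (Y ω)) + ε := by
          have hM1 : (0:ℝ) < M+1 := by positivity
          have h2 : M/(M+1) ≤ 1 := by rw [div_le_one hM1]; linarith
          have h3 : M * (ε/(M+1)) ≤ ε := by
            calc M * (ε/(M+1)) = (M/(M+1)) * ε := by ring
              _ ≤ 1 * ε := by nlinarith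
              _ = ε := one_mul ε
          linarith
  · -- `sInf B ≤ sInf A` : every Lipschitz predictor can be replaced by a measurable one
    refine le_csInf hAne ?_
    rintro r ⟨f, ⟨Kf, hKf⟩, hf01, rfl⟩
    obtain ⟨g, hg, hfg⟩ := hKf.extend_real
    have hfeq : (fun ω => ℓ (f (X ω)) (Y ω)) = fun ω => ℓ (g (X ω)) (Y ω) :=
      funext fun ω => by rw [hfg (hX𝒳 ω)]
    refine csInf_le ⟨0, hBlb⟩ ⟨g, hg.continuous.measurable,
      fun x hx => by rw [← hfg hx]; exact hf01 x hx, ?_⟩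
    rw [hfeq]
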